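/- For every natural number n, det st(n) = det w(n), where st(n) is the n×n skew-symmetric-type matrix with entries a_{00} = 1, a_{ii} = 0 for i > 0, a_{ij} = Σ_{s=2i−j+1}^{2j−i} C(i+j, s) for i < j, and a_{ij} = −a_{ji} for i > j; and w(n) is the n×n matrix with (i,j)-entry C(i+j+1, 2i−j) + C(i+j, 2i−j−1). -/

import Mathlib

/-- Extended binomial coefficient: `C a b = 0` when `b < 0` or `b > a`. -/
def C (a b : ℤ) : ℤ := if 0 ≤ b ∧ b ≤ a then (a.toNat).choose b.toNat else 0

lemma C_zero_of_neg {a b : ℤ} (h : b < 0) : C a b = 0 := by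
  simp [C]; intro h1; omega
lemma C_zero_of_gt {a b : ℤ} (h : a < b) : C a b = 0 := by
  simp [C]; intro h1; omega
lemma C_eq {a b : ℤ} (h1 : 0 ≤ b) (h2 : b ≤ a) : C a b = (a.toNat).choose b.toNat := by
  simp [C, h1, h2]
lemma C_pascal {a : ℤ} (b : ℤ) (ha : 0 ≤ a) : C (a+1) b = C a b + C a (b-1) := by
  rcases lt_trichotomy b 0 with h | h | h
  · rw [C_zero_of_neg h, C_zero_of_neg h, C_zero_of_neg (by omega)]; ring
  · subst h
    rw [C_eq le_rfl (by omega), C_eq le_rfl ha, C_zero_of_neg (by omega)]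
    simp
  · rcases le_or_gt b a with h2 | h2
    · rw [C_eq (by omega) (by omega), C_eq (by omega) h2, C_eq (by omega) (by omega)]
      have e1 : (a+1).toNat = a.toNat + 1 := by omega
      have e2 : b.toNat = (b-1).toNat + 1 := by omega
      rw [e1, e2, Nat.choose_succ_succ']
      have : (b - 1 + 1).toNat = (b-1).toNat + 1 := by omega
      rw [← e2]; push_cast; ring
    · rcases eq_or_lt_of_le (show a + 1 ≤ b by omega) with h3 | h3
      · rw [C_eq (by omega) (by omega), C_zero_of_gt (by omega), C_eq (by omega) (by omega)]
        have e1 : b.toNat = (a+1).toNat := by omega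
        rw [e1, Nat.choose_self]
        have e2 : (b-1).toNat = a.toNat := by omega
        rw [e2, Nat.choose_self]
        simp
      · rw [C_zero_of_gt (by omega), C_zero_of_gt (by omega), C_zero_of_gt (by omega)]; ring
lemma C_symm {a : ℤ} (b : ℤ) (ha : 0 ≤ a) : C a b = C a (a - b) := by
  rcases lt_trichotomy b 0 with h | h | h
  · rw [C_zero_of_neg h, C_zero_of_gt (by omega)]
  · subst h; rw [C_eq le_rfl ha, C_eq (by omega) (by omega)]; simp
  · rcases le_or_gt b a with h2 | h2
    · rw [C_eq (by omega) h2, C_eq (by omega) (by omega)]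
      have : (a - b).toNat = a.toNat - b.toNat := by omega
      rw [this, Nat.choose_symm (by omega)]
    · rw [C_zero_of_gt h2, C_zero_of_neg (by omega)]

noncomputable def Csum (N L U : ℤ) : ℤ := ∑ s ∈ Finset.Icc L U, C N s

lemma Csum_empty {N L U : ℤ} (h : U < L) : Csum N L U = 0 := by
  simp [Csum, Finset.Icc_eq_empty_of_lt h]

lemma sum_shift (g : ℤ → ℤ) (L U : ℤ) :
    ∑ s ∈ Finset.Icc L U, g (s-1) = ∑ s ∈ Finset.Icc (L-1) (U-1), g s := by
  apply Finset.sum_nbij' (fun s => s - 1) (fun s => s + 1) <;>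
    simp [Finset.mem_Icc] <;> omega

lemma Csum_succ (N L U : ℤ) (hN : 0 ≤ N) :
    Csum (N+1) L U = Csum N L U + Csum N (L-1) (U-1) := by
  unfold Csum
  rw [← sum_shift (fun s => C N s) L U, ← Finset.sum_add_distrib]
  exact Finset.sum_congr rfl fun s _ => C_pascal s hN

lemma Csum_peel_top {N L U : ℤ} (h : L ≤ U) :
    Csum N L U = Csum N L (U-1) + C N U := by
  unfold Csum
  have : Finset.Icc L U = insert U (Finset.Icc L (U-1)) := by
    ext x; simp [Finset.mem_Icc]; omega
  rw [this, Finset.sum_insert (by simp [Finset.mem_Icc])]; ring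

lemma Csum_peel_bot {N L U : ℤ} (h : L ≤ U) :
    Csum N L U = C N L + Csum N (L+1) U := by
  unfold Csum
  have : Finset.Icc L U = insert L (Finset.Icc (L+1) U) := by
    ext x; simp [Finset.mem_Icc]; omega
  rw [this, Finset.sum_insert (by simp [Finset.mem_Icc])]

lemma Csum_row : ∀ k : ℕ, Csum k 0 k = 2 ^ k
  | 0 => by simp [Csum, C]
  | (k+1) => by
    have h0 : ((k+1 : ℕ) : ℤ) = (k : ℤ) + 1 := by push_cast; ring
    rw [h0, Csum_succ _ _ _ (by positivity)]
    have h1 : Csum k 0 ((k:ℤ)+1) = Csum k 0 k + C k ((k:ℤ)+1) := by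
      have := Csum_peel_top (N := (k:ℤ)) (L := 0) (U := (k:ℤ)+1) (by omega)
      simpa using this
    have h2 : Csum k (0-1) ((k:ℤ)+1-1) = C k (-1) + Csum k 0 (k:ℤ) := by
      have := Csum_peel_bot (N := (k:ℤ)) (L := -1) (U := (k:ℤ)) (by omega)
      rw [show (0:ℤ)-1 = -1 by ring, show (k:ℤ)+1-1 = (k:ℤ) by ring, this]
      simp
    rw [h1, h2, C_zero_of_gt (by omega), C_zero_of_neg (by omega), Csum_row k]
    ring

-- Case a + 2 ≤ b
lemma keyL1a (a b : ℤ) (h0 : 0 ≤ a) (hb : a + 2 ≤ b) :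
    C (a+b+2) (2*a+2-b) + C (a+b+1) (2*a+1-b)
      = 2 * Csum (a+b) (2*a-b+1) (2*b-a) - Csum (a+b+1) (2*a-b+3) (2*b-a-1) := by
  set N := a + b with hN
  set L := 2*a - b with hL
  set U := 2*b - a with hU
  have hNpos : (0:ℤ) ≤ N := by omega
  have hord : L + 3 ≤ U - 1 := by omega
  have h1 : Csum (N+1) (L+3) (U-1) = Csum N (L+3) (U-1) + Csum N (L+2) (U-2) := by
    have := Csum_succ N (L+3) (U-1) hNpos
    rw [show L+3-1 = L+2 by ring, show U-1-1 = U-2 by ring] at this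
    exact this
  have h2 : Csum N (L+1) U = C N (L+1) + Csum N (L+2) U := by
    have := Csum_peel_bot (N := N) (L := L+1) (U := U) (by omega)
    rw [show L+1+1 = L+2 by ring] at this; exact this
  have h3 : Csum N (L+2) U = C N (L+2) + Csum N (L+3) U := by
    have := Csum_peel_bot (N := N) (L := L+2) (U := U) (by omega)
    rw [show L+2+1 = L+3 by ring] at this; exact this
  have h4 : Csum N (L+3) U = Csum N (L+3) (U-1) + C N U := Csum_peel_top (by omega)
  have h5 : Csum N (L+3) (U-1) = Csum N (L+3) (U-2) + C N (U-1) := by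
    have := Csum_peel_top (N := N) (L := L+3) (U := U-1) (by omega)
    rw [show U-1-1 = U-2 by ring] at this; exact this
  have h6 : Csum N (L+2) (U-2) = C N (L+2) + Csum N (L+3) (U-2) := by
    have := Csum_peel_bot (N := N) (L := L+2) (U := U-2) (by omega)
    rw [show L+2+1 = L+3 by ring] at this; exact this
  have s1 : C N (U-1) = C N (L+1) := by
    rw [C_symm (U-1) hNpos, show N - (U-1) = L+1 by omega]
  have s2 : C N U = C N L := by
    rw [C_symm U hNpos, show N - U = L by omega]
  have p1 : C (N+2) (L+2) = C (N+1) (L+2) + C (N+1) (L+1) := by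
    have := C_pascal (a := N+1) (L+2) (by omega)
    rw [show L+2-1 = L+1 by ring] at this
    rw [show N+2 = N+1+1 by ring]; exact this
  have p2 : C (N+1) (L+2) = C N (L+2) + C N (L+1) := by
    have := C_pascal (a := N) (L+2) hNpos
    rw [show L+2-1 = L+1 by ring] at this; exact this
  have p3 : C (N+1) (L+1) = C N (L+1) + C N L := by
    have := C_pascal (a := N) (L+1) hNpos
    rw [show L+1-1 = L by ring] at this; exact this
  have e1 : 2*a+2-b = L+2 := by omega
  have e2 : 2*a+1-b = L+1 := by omega
  have e3 : a+b+2 = N+2 := by omega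
  have e4 : a+b+1 = N+1 := by omega
  have e5 : 2*a-b+1 = L+1 := by omega
  have e6 : 2*a-b+3 = L+3 := by omega
  rw [e1, e2, e3, e4, e5, e6]
  linarith

-- Case b = a + 1
lemma keyL1b (a : ℤ) (h0 : 0 ≤ a) :
    C (2*a+3) (a+1) + C (2*a+2) a = 2 * Csum (2*a+1) a (a+2) := by
  have hN : (0:ℤ) ≤ 2*a+1 := by omega
  have h1 : Csum (2*a+1) a (a+2) = C (2*a+1) a + Csum (2*a+1) (a+1) (a+2) :=
    Csum_peel_bot (by omega)
  have h2 : Csum (2*a+1) (a+1) (a+2) = C (2*a+1) (a+1) + Csum (2*a+1) (a+2) (a+2) := by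
    have := Csum_peel_bot (N := 2*a+1) (L := a+1) (U := a+2) (by omega)
    rw [show a+1+1 = a+2 by ring] at this; exact this
  have h3 : Csum (2*a+1) (a+2) (a+2) = Csum (2*a+1) (a+2) (a+1) + C (2*a+1) (a+2) := by
    have := Csum_peel_top (N := 2*a+1) (L := a+2) (U := a+2) le_rfl
    rw [show a+2-1 = a+1 by ring] at this; exact this
  have h4 : Csum (2*a+1) (a+2) (a+1) = 0 := Csum_empty (by omega)
  have s1 : C (2*a+1) (a+1) = C (2*a+1) a := by
    rw [C_symm (a+1) hN, show 2*a+1 - (a+1) = a by ring]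
  have s2 : C (2*a+1) (a+2) = C (2*a+1) (a-1) := by
    rw [C_symm (a+2) hN, show 2*a+1 - (a+2) = a-1 by ring]
  have p1 : C (2*a+3) (a+1) = C (2*a+2) (a+1) + C (2*a+2) a := by
    have := C_pascal (a := 2*a+2) (a+1) (by omega)
    rw [show a+1-1 = a by ring, show 2*a+2+1 = 2*a+3 by ring] at this; exact this
  have p2 : C (2*a+2) (a+1) = C (2*a+1) (a+1) + C (2*a+1) a := by
    have := C_pascal (a := 2*a+1) (a+1) hN
    rw [show a+1-1 = a by ring, show 2*a+1+1 = 2*a+2 by ring] at this; exact this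
  have p3 : C (2*a+2) a = C (2*a+1) a + C (2*a+1) (a-1) := by
    have := C_pascal (a := 2*a+1) a hN
    rw [show 2*a+1+1 = 2*a+2 by ring] at this; exact this
  linarith

-- Case a = b (a ≥ 1)
lemma keyL2 (a : ℤ) (h1 : 1 ≤ a) :
    C (2*a+2) (a+2) + C (2*a+1) (a+1) = Csum (2*a+1) a (a+2) := by
  have hN : (0:ℤ) ≤ 2*a+1 := by omega
  have h1' : Csum (2*a+1) a (a+2) = C (2*a+1) a + Csum (2*a+1) (a+1) (a+2) :=
    Csum_peel_bot (by omega)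
  have h2 : Csum (2*a+1) (a+1) (a+2) = C (2*a+1) (a+1) + Csum (2*a+1) (a+2) (a+2) := by
    have := Csum_peel_bot (N := 2*a+1) (L := a+1) (U := a+2) (by omega)
    rw [show a+1+1 = a+2 by ring] at this; exact this
  have h3 : Csum (2*a+1) (a+2) (a+2) = Csum (2*a+1) (a+2) (a+1) + C (2*a+1) (a+2) := by
    have := Csum_peel_top (N := 2*a+1) (L := a+2) (U := a+2) le_rfl
    rw [show a+2-1 = a+1 by ring] at this; exact this
  have h4 : Csum (2*a+1) (a+2) (a+1) = 0 := Csum_empty (by omega)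
  have s1 : C (2*a+1) (a+1) = C (2*a+1) a := by
    rw [C_symm (a+1) hN, show 2*a+1 - (a+1) = a by ring]
  have p1 : C (2*a+2) (a+2) = C (2*a+1) (a+2) + C (2*a+1) (a+1) := by
    have := C_pascal (a := 2*a+1) (a+2) hN
    rw [show a+2-1 = a+1 by ring, show 2*a+1+1 = 2*a+2 by ring] at this; exact this
  linarith

-- Case b < a
lemma keyL3 (a b : ℤ) (hb : 1 ≤ b) (h : b < a) :
    C (a+b+2) (2*a+2-b) + C (a+b+1) (2*a+1-b)
      = -(2 * Csum (a+b) (2*b-a+1) (2*a-b)) + Csum (a+b+1) (2*b-a) (2*a-b+2) := by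
  set N := a + b with hN
  set L := 2*b - a with hL
  set U := 2*a - b with hU
  have hNpos : (0:ℤ) ≤ N := by omega
  have hord : L + 1 ≤ U := by omega
  have h1 : Csum (N+1) L (U+2) = Csum N L (U+2) + Csum N (L-1) (U+1) := by
    have := Csum_succ N L (U+2) hNpos
    rw [show U+2-1 = U+1 by ring] at this; exact this
  have h2 : Csum N L (U+2) = C N L + Csum N (L+1) (U+2) := Csum_peel_bot (by omega)
  have h3 : Csum N (L+1) (U+2) = Csum N (L+1) (U+1) + C N (U+2) := by
    have := Csum_peel_top (N := N) (L := L+1) (U := U+2) (by omega)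
    rw [show U+2-1 = U+1 by ring] at this; exact this
  have h4 : Csum N (L+1) (U+1) = Csum N (L+1) U + C N (U+1) := by
    have := Csum_peel_top (N := N) (L := L+1) (U := U+1) (by omega)
    rw [show U+1-1 = U by ring] at this; exact this
  have h5 : Csum N (L-1) (U+1) = C N (L-1) + Csum N L (U+1) := by
    have := Csum_peel_bot (N := N) (L := L-1) (U := U+1) (by omega)
    rw [show L-1+1 = L by ring] at this; exact this
  have h6 : Csum N L (U+1) = C N L + Csum N (L+1) (U+1) := Csum_peel_bot (by omega)
  have s1 : C N (U+1) = C N (L-1) := by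
    rw [C_symm (U+1) hNpos, show N - (U+1) = L-1 by omega]
  have s2 : C N (U+2) = C N (L-2) := by
    rw [C_symm (U+2) hNpos, show N - (U+2) = L-2 by omega]
  have t1 : C (N+2) (U+2) = C (N+2) L := by
    rw [C_symm (U+2) (by omega), show N+2 - (U+2) = L by omega]
  have t2 : C (N+1) (U+1) = C (N+1) L := by
    rw [C_symm (U+1) (by omega), show N+1 - (U+1) = L by omega]
  have p1 : C (N+2) L = C (N+1) L + C (N+1) (L-1) := by
    have := C_pascal (a := N+1) L (by omega)
    rw [show N+1+1 = N+2 by ring] at this; exact this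
  have p2 : C (N+1) L = C N L + C N (L-1) := C_pascal L hNpos
  have p3 : C (N+1) (L-1) = C N (L-1) + C N (L-2) := by
    have := C_pascal (a := N) (L-1) hNpos
    rw [show L-1-1 = L-2 by ring] at this; exact this
  have e1 : 2*a+2-b = U+2 := by omega
  have e2 : 2*a+1-b = U+1 := by omega
  have e3 : a+b+2 = N+2 := by omega
  have e4 : a+b+1 = N+1 := by omega
  have e5 : 2*b-a+1 = L+1 := by omega
  have e6 : 2*a-b+2 = U+2 := by omega
  rw [e1, e2, e3, e4, e5, e6]
  linarith

/-- The matrix `st(n)` with integer entries. -/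
noncomputable def st (n : ℕ) : Matrix (Fin n) (Fin n) ℤ :=
  fun i j =>
    if i = j then (if (i : ℕ) = 0 then 1 else 0)
    else if (i : ℕ) < j then
      ∑ s ∈ Finset.Icc (2*(i : ℤ) - j + 1) (2*(j : ℤ) - i), C ((i : ℤ) + j) s
    else
      -(∑ s ∈ Finset.Icc (2*(j : ℤ) - i + 1) (2*(i : ℤ) - j), C ((j : ℤ) + i) s)

/-- The matrix `w(n)` with integer entries. -/
def w (n : ℕ) : Matrix (Fin n) (Fin n) ℤ :=
  fun i j => C ((i : ℤ) + j + 1) (2*(i : ℤ) - j) + C ((i : ℤ) + j) (2*(i : ℤ) - j - 1)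

lemma st_diag {n : ℕ} (i : Fin n) : st n i i = if (i:ℕ) = 0 then 1 else 0 := by
  simp [st]

lemma st_lt {n : ℕ} {i j : Fin n} (h : (i:ℕ) < (j:ℕ)) :
    st n i j = Csum ((i:ℤ)+j) (2*(i:ℤ)-j+1) (2*(j:ℤ)-i) := by
  have hne : i ≠ j := by intro e; subst e; exact lt_irrefl _ h
  simp only [st, if_neg hne, if_pos h, Csum]

lemma st_gt {n : ℕ} {i j : Fin n} (h : (j:ℕ) < (i:ℕ)) :
    st n i j = -Csum ((j:ℤ)+i) (2*(j:ℤ)-i+1) (2*(i:ℤ)-j) := by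
  have hne : i ≠ j := by intro e; subst e; exact lt_irrefl _ h
  simp only [st, if_neg hne, if_neg (by omega : ¬ ((i:ℕ) < (j:ℕ))), Csum]

lemma st_symm {n : ℕ} (i j : Fin n) :
    st n i j + st n j i = if (i:ℕ) = 0 ∧ (j:ℕ) = 0 then 2 else 0 := by
  rcases lt_trichotomy (i:ℕ) (j:ℕ) with h | h | h
  · rw [st_lt h, st_gt h, if_neg (by omega)]; ring
  · have : i = j := Fin.ext h
    subst this
    rw [st_diag]
    by_cases h0 : (i:ℕ) = 0 <;> simp [h0]
  · rw [st_gt h, st_lt h, if_neg (by omega)]; ring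

lemma Csum_pow (k : ℕ) (hk : 1 ≤ k) : Csum (k:ℤ) (1-(k:ℤ)) (2*(k:ℤ)) = 2^k := by
  rw [← Csum_row k]
  unfold Csum
  symm
  apply Finset.sum_subset
  · intro x hx
    simp only [Finset.mem_Icc] at *
    omega
  · intro x hx hx'
    simp only [Finset.mem_Icc] at *
    rcases (by omega : x < 0 ∨ (k:ℤ) < x) with h | h
    · exact C_zero_of_neg h
    · exact C_zero_of_gt h

lemma st_row0 {n : ℕ} (i j : Fin n) (hi : (i:ℕ) = 0) : st n i j = 2^(j:ℕ) := by
  rcases Nat.eq_zero_or_pos (j:ℕ) with hj | hj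
  · have : i = j := Fin.ext (by omega)
    subst this
    rw [st_diag, if_pos hi, hj]; norm_num
  · rw [st_lt (by omega)]
    have h1 : ((i:ℕ):ℤ) = 0 := by exact_mod_cast hi
    have h2 : (i:ℤ) = 0 := by exact_mod_cast h1
    rw [h2]
    have := Csum_pow (j:ℕ) hj
    rw [show (0:ℤ)+(j:ℤ) = ((j:ℕ):ℤ) by push_cast; ring,
        show 2*(0:ℤ)-(j:ℤ)+1 = 1-((j:ℕ):ℤ) by push_cast; ring,
        show 2*(j:ℤ)-(0:ℤ) = 2*((j:ℕ):ℤ) by push_cast; ring]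
    exact this

lemma st_col0 {n : ℕ} (i j : Fin n) (hj : (j:ℕ) = 0) :
    st n i j = if (i:ℕ) = 0 then 1 else -2^(i:ℕ) := by
  rcases Nat.eq_zero_or_pos (i:ℕ) with hi | hi
  · have : i = j := Fin.ext (by omega)
    subst this
    rw [st_diag, if_pos hi, if_pos hi]
  · rw [st_gt (by omega), if_neg (by omega)]
    have h2 : (j:ℤ) = 0 := by
      have : ((j:ℕ):ℤ) = 0 := by exact_mod_cast hj
      exact_mod_cast this
    rw [h2]
    have := Csum_pow (i:ℕ) hi
    rw [show (0:ℤ)+(i:ℤ) = ((i:ℕ):ℤ) by push_cast; ring,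
        show 2*(0:ℤ)-(i:ℤ)+1 = 1-((i:ℕ):ℤ) by push_cast; ring,
        show 2*(i:ℤ)-(0:ℤ) = 2*((i:ℕ):ℤ) by push_cast; ring]
    rw [this]

lemma w_row0 {n : ℕ} (i j : Fin n) (hi : (i:ℕ) = 0) :
    w n i j = if (j:ℕ) = 0 then 1 else 0 := by
  have h2 : (i:ℤ) = 0 := by
    have : ((i:ℕ):ℤ) = 0 := by exact_mod_cast hi
    exact_mod_cast this
  unfold w
  rw [h2]
  rcases Nat.eq_zero_or_pos (j:ℕ) with hj | hj
  · have h3 : (j:ℤ) = 0 := by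
      have : ((j:ℕ):ℤ) = 0 := by exact_mod_cast hj
      exact_mod_cast this
    rw [h3, if_pos hj]
    rw [show 2*(0:ℤ)-0-1 = -1 by ring, show (0:ℤ)+0+1 = 1 by ring,
        show 2*(0:ℤ)-0 = 0 by ring, show (0:ℤ)+0 = 0 by ring]
    rw [C_eq le_rfl (by norm_num), C_zero_of_neg (by norm_num)]
    simp
  · have h3 : 1 ≤ (j:ℤ) := by exact_mod_cast hj
    rw [if_neg (by omega)]
    rw [C_zero_of_neg (by omega), C_zero_of_neg (by omega)]
    ring

/-- The key entrywise identity: `w k j = 2 st i j - st k j` when `k = i+1`, `j ≥ 1`. -/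
lemma keyE2 {n : ℕ} (i k j : Fin n) (hik : (i:ℕ)+1 = (k:ℕ)) (hj : 1 ≤ (j:ℕ)) :
    w n k j = 2 * st n i j - st n k j := by
  have hk : (k:ℤ) = (i:ℤ) + 1 := by
    have : ((i:ℕ):ℤ) + 1 = ((k:ℕ):ℤ) := by exact_mod_cast congrArg (Nat.cast : ℕ → ℤ) hik
    push_cast at this ⊢
    omega
  set a : ℤ := (i:ℤ) with ha
  set b : ℤ := (j:ℤ) with hb
  have hb1 : 1 ≤ b := by rw [hb]; exact_mod_cast hj
  have ha0 : 0 ≤ a := by rw [ha]; positivity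
  have hw : w n k j = C (a+b+2) (2*a+2-b) + C (a+b+1) (2*a+1-b) := by
    unfold w
    rw [hk, show 2*(a+1)-b-1 = 2*a+1-b by ring, show a+1+b+1 = a+b+2 by ring,
        show 2*(a+1)-b = 2*a+2-b by ring, show a+1+b = a+b+1 by ring]
  rw [hw]
  rcases lt_trichotomy a b with h | h | h
  · rcases eq_or_lt_of_le (show a + 1 ≤ b by omega) with h2 | h2
    · -- b = a + 1 : st k j = 0 since k = j
      have h2' : (i:ℕ) + 1 = (j:ℕ) := by
        have : a + 1 = b := h2
        rw [ha, hb] at this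
        exact_mod_cast this
      have hkj : k = j := Fin.ext (by omega)
      rw [hkj, st_diag, if_neg (by omega), st_lt (show (i:ℕ) < (j:ℕ) by omega)]
      rw [show a+b+2 = 2*a+3 by omega, show 2*a+2-b = a+1 by omega,
          show a+b+1 = 2*a+2 by omega, show 2*a+1-b = a by omega,
          show a+b = 2*a+1 by omega, show 2*a-b+1 = a by omega,
          show 2*b-a = a+2 by omega]
      rw [keyL1b a ha0]
      ring
    · -- a + 2 ≤ b
      have hlt1 : (i:ℕ) < (j:ℕ) := by omega
      have hlt2 : (k:ℕ) < (j:ℕ) := by omega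
      rw [st_lt hlt1, st_lt hlt2, hk]
      rw [show a+1+b = a+b+1 by ring, show 2*(a+1)-b+1 = 2*a-b+3 by ring,
          show 2*b-(a+1) = 2*b-a-1 by ring]
      exact keyL1a a b ha0 (by omega)
  · -- a = b : i = j, st i j = 0 (a ≥ 1), st k j via gt
    have h2' : (i:ℕ) = (j:ℕ) := by
      have : a = b := h
      rw [ha, hb] at this
      exact_mod_cast this
    have hij : i = j := Fin.ext h2'
    rw [hij, st_diag, if_neg (by omega), st_gt (show (j:ℕ) < (k:ℕ) by omega), hk]
    rw [show b+(a+1) = 2*a+1 by omega, show 2*b-(a+1)+1 = a by omega,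
        show 2*(a+1)-b = a+2 by omega,
        show a+b+2 = 2*a+2 by omega, show 2*a+2-b = a+2 by omega,
        show a+b+1 = 2*a+1 by omega, show 2*a+1-b = a+1 by omega]
    rw [keyL2 a (by omega)]
    ring
  · -- b < a
    have hgt1 : (j:ℕ) < (i:ℕ) := by omega
    have hgt2 : (j:ℕ) < (k:ℕ) := by omega
    rw [st_gt hgt1, st_gt hgt2, hk]
    rw [show b+(a+1) = a+b+1 by ring, show 2*b-(a+1)+1 = 2*b-a by ring,
        show 2*(a+1)-b = 2*a-b+2 by ring, show b+a = a+b by ring]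
    rw [keyL3 a b hb1 h]
    ring

open Matrix

lemma det_row0 {m : ℕ} (M : Matrix (Fin (m+1)) (Fin (m+1)) ℤ) (c : ℤ)
    (h : ∀ j, M 0 j = if j = 0 then c else 0) :
    M.det = c * (M.submatrix Fin.succ Fin.succ).det := by
  rw [Matrix.det_succ_row_zero]
  rw [Finset.sum_eq_single 0]
  · rw [h 0, if_pos rfl, Fin.succAbove_zero]
    simp
  · intro j _ hj
    rw [h j, if_neg hj]
    ring
  · intro h'
    exact absurd (Finset.mem_univ 0) h'

lemma det_corner {m : ℕ} (K : Matrix (Fin (m+1)) (Fin (m+1)) ℤ) (c : ℤ) :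
    (Matrix.of fun i j => K i j + if i = 0 ∧ j = 0 then c else 0).det
      = K.det + c * (K.submatrix Fin.succ Fin.succ).det := by
  have heq : (Matrix.of fun i j => K i j + if i = 0 ∧ j = 0 then c else 0)
      = Matrix.updateRow K 0 ((K 0) + c • (fun j => if j = 0 then (1:ℤ) else 0)) := by
    ext i j
    by_cases hi : i = 0
    · subst hi
      rw [Matrix.updateRow_self]
      by_cases hj : j = 0 <;> simp [hj]
    · rw [Matrix.updateRow_ne hi]
      simp [hi]
  rw [heq, Matrix.det_updateRow_add, Matrix.det_updateRow_smul,
      Matrix.updateRow_eq_self]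
  have h4 : ∀ j, (Matrix.updateRow K 0 (fun j => (if j = 0 then (1:ℤ) else 0))) 0 j
      = if j = 0 then 1 else 0 := fun j => by rw [Matrix.updateRow_self]
  rw [det_row0 _ 1 h4, one_mul]
  have h5 : (Matrix.updateRow K 0 (fun j => (if j = 0 then (1:ℤ) else 0))).submatrix
      Fin.succ Fin.succ = K.submatrix Fin.succ Fin.succ := by
    ext i j
    rw [Matrix.submatrix_apply, Matrix.submatrix_apply,
        Matrix.updateRow_ne (Fin.succ_ne_zero i)]
  rw [h5]

lemma det_skew_zero {m : ℕ} (K : Matrix (Fin m) (Fin m) ℤ) (hm : Odd m)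
    (h : ∀ i j, K j i = -K i j) : K.det = 0 := by
  have hT : Kᵀ = -K := by
    ext i j
    rw [Matrix.transpose_apply, Matrix.neg_apply]
    exact h i j
  have : K.det = (-1)^m * K.det := by
    calc K.det = Kᵀ.det := (Matrix.det_transpose K).symm
    _ = (-K).det := by rw [hT]
    _ = (-1)^(Fintype.card (Fin m)) * K.det := by rw [Matrix.det_neg]
    _ = (-1)^m * K.det := by rw [Fintype.card_fin]
  rw [hm.neg_one_pow] at this
  omega

lemma prod_diag_sign (k : ℕ) :
    (∏ i : Fin (k+1), if i = 0 then (1:ℤ) else -1) = (-1)^k := by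
  rw [Fin.prod_univ_succ]
  simp [Fin.succ_ne_zero]

lemma core {m : ℕ} (P Z : Matrix (Fin (m+1)) (Fin (m+1)) ℤ)
    (hskew : ∀ i j, P i j + P j i = if i = 0 ∧ j = 0 then 8 else 0)
    (hrel0 : ∀ i, P i 0 = (if i = 0 then 8 else 0) - Z i 0)
    (hrel : ∀ (i : Fin (m+1)) (j : Fin m),
      P i j.succ = 2 * Z i j.castSucc - Z i j.succ) :
    P.det = Z.det := by
  set K : Matrix (Fin (m+1)) (Fin (m+1)) ℤ :=
    Matrix.of fun i j => P i j - (if i = 0 ∧ j = 0 then 4 else 0) with hKdef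
  have hK : ∀ i j, K j i = -K i j := by
    intro i j
    have h := hskew i j
    by_cases h1 : i = 0 ∧ j = 0
    · obtain ⟨hi, hj⟩ := h1
      subst hi; subst hj
      rw [if_pos ⟨rfl, rfl⟩] at h
      simp only [hKdef, Matrix.of_apply]
      norm_num
      omega
    · have h2 : ¬(j = 0 ∧ i = 0) := fun ⟨a, b⟩ => h1 ⟨b, a⟩
      rw [if_neg h1] at h
      simp only [hKdef, Matrix.of_apply, if_neg h1, if_neg h2]
      omega
  set D : Matrix (Fin (m+1)) (Fin (m+1)) ℤ :=
    Matrix.of fun k j => if k = j then -1 else if (k:ℕ)+1 = (j:ℕ) then 2 else 0 with hDdef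
  have hDtri : D.BlockTriangular id := by
    intro i j hij
    simp only [hDdef, Matrix.of_apply]
    rw [if_neg (by intro e; subst e; exact lt_irrefl _ hij),
        if_neg (by simp only [id] at hij; omega)]
  have hDdet : D.det = (-1)^(m+1) := by
    rw [Matrix.det_of_upperTriangular hDtri]
    calc (∏ i : Fin (m+1), D i i) = ∏ _i : Fin (m+1), (-1:ℤ) := by
          apply Finset.prod_congr rfl
          intro i _
          simp [hDdef]
    _ = (-1)^(m+1) := by rw [Finset.prod_const]; simp
  have hZD : Z * D = Matrix.of fun i j => K i j + if i = 0 ∧ j = 0 then (-4:ℤ) else 0 := by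
    ext i j
    rw [Matrix.mul_apply]
    rcases Fin.eq_zero_or_eq_succ j with hj | ⟨j', hj⟩
    · subst hj
      have hterm : ∀ k, Z i k * D k 0 = if k = 0 then -Z i 0 else 0 := by
        intro k
        by_cases hk : k = 0
        · subst hk
          rw [if_pos rfl]
          simp only [hDdef, Matrix.of_apply]
          norm_num
        · rw [if_neg hk]
          simp only [hDdef, Matrix.of_apply]
          rw [if_neg hk, if_neg (by simp)]
          ring
      rw [Finset.sum_congr rfl (fun k _ => hterm k), Finset.sum_ite_eq' Finset.univ,
          if_pos (Finset.mem_univ _)]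
      have h0 := hrel0 i
      by_cases hi : i = 0
      · subst hi
        simp only [hKdef, Matrix.of_apply] at *
        norm_num at h0 ⊢
        omega
      · simp only [hKdef, Matrix.of_apply] at *
        rw [if_neg hi] at h0
        rw [if_neg (fun h => hi h.1), if_neg (fun h => hi h.1)]
        omega
    · subst hj
      have hterm : ∀ k, Z i k * D k j'.succ =
          (if k = j'.castSucc then 2 * Z i j'.castSucc else 0)
          + (if k = j'.succ then -Z i j'.succ else 0) := by
        intro k
        by_cases hk1 : k = j'.castSucc
        · subst hk1
          rw [if_pos rfl, if_neg (by intro e; have := congrArg Fin.val e; simp at this)]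
          simp only [hDdef, Matrix.of_apply]
          rw [if_neg (by intro e; have := congrArg Fin.val e; simp at this),
              if_pos (by simp)]
          ring
        · by_cases hk2 : k = j'.succ
          · subst hk2
            rw [if_neg hk1, if_pos rfl]
            simp only [hDdef, Matrix.of_apply]
            norm_num
          · rw [if_neg hk1, if_neg hk2]
            simp only [hDdef, Matrix.of_apply]
            rw [if_neg hk2, if_neg (by
              intro e
              apply hk1
              apply Fin.ext
              simp only [Fin.val_succ] at e
              simp only [Fin.coe_castSucc]
              omega)]
            ring
      rw [Finset.sum_congr rfl (fun k _ => hterm k), Finset.sum_add_distrib,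
          Finset.sum_ite_eq' Finset.univ, Finset.sum_ite_eq' Finset.univ,
          if_pos (Finset.mem_univ _), if_pos (Finset.mem_univ _)]
      have h2 : ¬(i = 0 ∧ j'.succ = 0) := fun h => Fin.succ_ne_zero j' h.2
      simp only [Matrix.of_apply, hKdef]
      rw [if_neg h2, if_neg h2]
      have h3 := hrel i j'
      omega
  have hP : P = Matrix.of fun i j => K i j + if i = 0 ∧ j = 0 then (4:ℤ) else 0 := by
    ext i j
    simp only [hKdef, Matrix.of_apply]
    by_cases h1 : i = 0 ∧ j = 0 <;> simp [h1]
  have dP : P.det = K.det + 4 * (K.submatrix Fin.succ Fin.succ).det := by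
    rw [hP, det_corner]
  have dZ : Z.det * D.det = K.det + (-4) * (K.submatrix Fin.succ Fin.succ).det := by
    rw [← Matrix.det_mul, hZD, det_corner]
  have hK0 : ∀ i j : Fin m, (K.submatrix Fin.succ Fin.succ) j i
      = -(K.submatrix Fin.succ Fin.succ) i j := by
    intro i j
    simp only [Matrix.submatrix_apply]
    exact hK _ _
  rcases Nat.even_or_odd m with he | ho
  · have hKzero : K.det = 0 := det_skew_zero K (Even.add_one he) hK
    have hD1 : D.det = -1 := by rw [hDdet, (Even.add_one he).neg_one_pow]
    rw [hD1] at dZ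
    omega
  · have hK0zero : (K.submatrix Fin.succ Fin.succ).det = 0 :=
      det_skew_zero _ ho hK0
    have hD1 : D.det = 1 := by rw [hDdet, (Odd.add_one ho).neg_one_pow]
    rw [hD1] at dZ
    omega

def Amat (n : ℕ) : Matrix (Fin n) (Fin n) ℤ := Matrix.of fun i j =>
  if (i:ℕ) = 0 then (if (j:ℕ) = 0 then 1 else 0)
  else if (j:ℕ)+1 = (i:ℕ) then 2 else if j = i then -1 else 0

lemma Amat_zero {n : ℕ} (k : Fin (n+1)) : Amat (n+1) 0 k = if k = 0 then 1 else 0 := by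
  simp only [Amat, Matrix.of_apply, Fin.val_zero, if_true]
  by_cases hk : k = 0
  · rw [if_pos (by rw [hk]; rfl), if_pos hk]
  · have hk' : ¬(k:ℕ) = 0 := by
      simp only [Fin.ext_iff, Fin.val_zero] at hk
      omega
    rw [if_neg hk', if_neg hk]

lemma Amat_succ {n : ℕ} (i : Fin n) (k : Fin (n+1)) :
    Amat (n+1) i.succ k = (if k = i.castSucc then 2 else 0) + (if k = i.succ then -1 else 0) := by
  simp only [Amat, Matrix.of_apply, Fin.val_succ]
  rw [if_neg (by omega)]
  by_cases hk1 : k = i.castSucc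
  · subst hk1
    rw [if_pos (by simp), if_pos rfl, if_neg (by
      intro e; have := congrArg Fin.val e; simp at this)]
    ring
  · rw [if_neg (by
      intro e
      exact hk1 (Fin.ext (by simp only [Fin.coe_castSucc]; omega))), if_neg hk1]
    by_cases hk2 : k = i.succ
    · rw [if_pos hk2]
      ring
    · rw [if_neg hk2]
      ring

lemma Amat_mul_zero {n : ℕ} (S : Matrix (Fin (n+1)) (Fin (n+1)) ℤ) (j : Fin (n+1)) :
    (Amat (n+1) * S) 0 j = S 0 j := by
  rw [Matrix.mul_apply]
  have hterm : ∀ k, Amat (n+1) 0 k * S k j = if k = 0 then S 0 j else 0 := by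
    intro k
    rw [Amat_zero]
    by_cases hk : k = 0
    · subst hk; rw [if_pos rfl, if_pos rfl]; ring
    · rw [if_neg hk, if_neg hk]; ring
  rw [Finset.sum_congr rfl (fun k _ => hterm k), Finset.sum_ite_eq' Finset.univ,
      if_pos (Finset.mem_univ _)]

lemma Amat_mul_succ {n : ℕ} (S : Matrix (Fin (n+1)) (Fin (n+1)) ℤ) (i : Fin n) (j : Fin (n+1)) :
    (Amat (n+1) * S) i.succ j = 2 * S i.castSucc j - S i.succ j := by
  rw [Matrix.mul_apply]
  have hterm : ∀ k, Amat (n+1) i.succ k * S k j =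
      (if k = i.castSucc then 2 * S i.castSucc j else 0)
      + (if k = i.succ then -(S i.succ j) else 0) := by
    intro k
    rw [Amat_succ, add_mul]
    congr 1
    · by_cases hk : k = i.castSucc
      · subst hk; rw [if_pos rfl, if_pos rfl]
      · rw [if_neg hk, if_neg hk]; ring
    · by_cases hk : k = i.succ
      · subst hk; rw [if_pos rfl, if_pos rfl]; ring
      · rw [if_neg hk, if_neg hk]; ring
  rw [Finset.sum_congr rfl (fun k _ => hterm k), Finset.sum_add_distrib,
      Finset.sum_ite_eq' Finset.univ, Finset.sum_ite_eq' Finset.univ,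
      if_pos (Finset.mem_univ _), if_pos (Finset.mem_univ _)]
  ring

lemma mul_Amat_zero {n : ℕ} (X : Matrix (Fin (n+1)) (Fin (n+1)) ℤ) (i : Fin (n+1)) :
    (X * (Amat (n+1))ᵀ) i 0 = X i 0 := by
  rw [Matrix.mul_apply]
  have hterm : ∀ k, X i k * (Amat (n+1))ᵀ k 0 = if k = 0 then X i 0 else 0 := by
    intro k
    rw [Matrix.transpose_apply, Amat_zero]
    by_cases hk : k = 0
    · subst hk; rw [if_pos rfl, if_pos rfl]; ring
    · rw [if_neg hk, if_neg hk]; ring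
  rw [Finset.sum_congr rfl (fun k _ => hterm k), Finset.sum_ite_eq' Finset.univ,
      if_pos (Finset.mem_univ _)]

lemma mul_Amat_succ {n : ℕ} (X : Matrix (Fin (n+1)) (Fin (n+1)) ℤ) (i : Fin (n+1)) (j : Fin n) :
    (X * (Amat (n+1))ᵀ) i j.succ = 2 * X i j.castSucc - X i j.succ := by
  rw [Matrix.mul_apply]
  have hterm : ∀ k, X i k * (Amat (n+1))ᵀ k j.succ =
      (if k = j.castSucc then 2 * X i j.castSucc else 0)
      + (if k = j.succ then -(X i j.succ) else 0) := by
    intro k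
    rw [Matrix.transpose_apply, Amat_succ, mul_add]
    congr 1
    · by_cases hk : k = j.castSucc
      · subst hk; rw [if_pos rfl, if_pos rfl]; ring
      · rw [if_neg hk, if_neg hk]; ring
    · by_cases hk : k = j.succ
      · subst hk; rw [if_pos rfl, if_pos rfl]; ring
      · rw [if_neg hk, if_neg hk]; ring
  rw [Finset.sum_congr rfl (fun k _ => hterm k), Finset.sum_add_distrib,
      Finset.sum_ite_eq' Finset.univ, Finset.sum_ite_eq' Finset.univ,
      if_pos (Finset.mem_univ _), if_pos (Finset.mem_univ _)]
  ring

lemma Amat_det {n : ℕ} : (Amat (n+1)).det = (-1)^n := by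
  have hAtri : ((Amat (n+1))ᵀ).BlockTriangular id := by
    intro i j hij
    simp only [id] at hij
    rw [Matrix.transpose_apply]
    simp only [Amat, Matrix.of_apply]
    by_cases hj : (j:ℕ) = 0
    · rw [if_pos hj, if_neg (by omega)]
    · rw [if_neg hj, if_neg (by omega), if_neg (by
        intro e; have := congrArg Fin.val e; omega)]
  rw [← Matrix.det_transpose, Matrix.det_of_upperTriangular hAtri]
  calc (∏ i : Fin (n+1), (Amat (n+1))ᵀ i i)
      = ∏ i : Fin (n+1), (if i = 0 then (1:ℤ) else -1) := by
        apply Finset.prod_congr rfl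
        intro i _
        rw [Matrix.transpose_apply]
        simp only [Amat, Matrix.of_apply]
        by_cases hi : (i:ℕ) = 0
        · rw [if_pos hi, if_pos hi, if_pos (Fin.ext hi)]
        · rw [if_neg hi, if_neg (by omega)]
          rw [if_neg (show ¬ i = 0 from fun e => hi (by rw [e]; rfl))]
          norm_num
    _ = (-1)^n := prod_diag_sign n

theorem det_st_eq_det_w (n : ℕ) : (st n).det = (w n).det := by
  match n with
  | 0 =>
    rw [Matrix.det_fin_zero, Matrix.det_fin_zero]
  | 1 =>
    rw [Matrix.det_fin_one, Matrix.det_fin_one, st_diag, w_row0 _ _ rfl]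
  | (m+2) =>
    have hA : (Amat (m+2)).det = (-1)^(m+1) := Amat_det (n := m+1)
    -- abbreviations as plain terms
    -- Y = Amat (m+2) * st (m+2), M = Y * (Amat (m+2))ᵀ
    have hMrow0 : ∀ j : Fin (m+2),
        (Amat (m+2) * st (m+2) * (Amat (m+2))ᵀ) 0 j = if j = 0 then 1 else 0 := by
      intro j
      rcases Fin.eq_zero_or_eq_succ j with hj | ⟨j', hj⟩
      · subst hj
        rw [if_pos rfl, mul_Amat_zero (n := m+1), Amat_mul_zero (n := m+1), st_diag]
        norm_num
      · subst hj
        rw [if_neg (Fin.succ_ne_zero j'), mul_Amat_succ (n := m+1),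
            Amat_mul_zero (n := m+1), Amat_mul_zero (n := m+1),
            st_row0 _ _ rfl, st_row0 _ _ rfl, Fin.coe_castSucc, Fin.val_succ,
            pow_succ]
        ring
    have hdM : (Amat (m+2) * st (m+2) * (Amat (m+2))ᵀ).det = (st (m+2)).det := by
      rw [Matrix.det_mul, Matrix.det_mul, Matrix.det_transpose, hA]
      have h1 : ((-1:ℤ)^(m+1)) * ((-1:ℤ)^(m+1)) = 1 := by
        rw [← pow_add]
        exact Even.neg_one_pow ⟨m+1, by ring⟩
      calc ((-1:ℤ)^(m+1) * (st (m+2)).det) * ((-1:ℤ)^(m+1))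
          = (((-1:ℤ)^(m+1)) * ((-1:ℤ)^(m+1))) * (st (m+2)).det := by ring
        _ = (st (m+2)).det := by rw [h1, one_mul]
    have hPdet : (Amat (m+2) * st (m+2) * (Amat (m+2))ᵀ).det
        = ((Amat (m+2) * st (m+2) * (Amat (m+2))ᵀ).submatrix Fin.succ Fin.succ).det := by
      rw [det_row0 (m := m+1) _ 1 hMrow0, one_mul]
    have hwrow : ∀ j : Fin (m+2), w (m+2) 0 j = if j = 0 then 1 else 0 := by
      intro j
      rw [w_row0 _ _ rfl]
      by_cases hj : j = 0
      · rw [if_pos (by rw [hj]; rfl), if_pos hj]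
      · rw [if_neg (fun h => hj (Fin.ext (by rw [h]; rfl))), if_neg hj]
    have hwdet : (w (m+2)).det = ((w (m+2)).submatrix Fin.succ Fin.succ).det := by
      rw [det_row0 (m := m+1) _ 1 hwrow, one_mul]
    have hwZ : (w (m+2)).submatrix Fin.succ Fin.succ
        = (Amat (m+2) * st (m+2)).submatrix Fin.succ Fin.succ := by
      ext i j
      rw [Matrix.submatrix_apply, Matrix.submatrix_apply, Amat_mul_succ (n := m+1)]
      exact keyE2 i.castSucc i.succ j.succ (by simp) (by simp)
    -- hypotheses of `core`
    have hskew : ∀ i j : Fin (m+1),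
        ((Amat (m+2) * st (m+2) * (Amat (m+2))ᵀ).submatrix Fin.succ Fin.succ) i j
          + ((Amat (m+2) * st (m+2) * (Amat (m+2))ᵀ).submatrix Fin.succ Fin.succ) j i
          = if i = 0 ∧ j = 0 then 8 else 0 := by
      intro i j
      rw [Matrix.submatrix_apply, Matrix.submatrix_apply,
          mul_Amat_succ (n := m+1), mul_Amat_succ (n := m+1),
          Amat_mul_succ (n := m+1), Amat_mul_succ (n := m+1),
          Amat_mul_succ (n := m+1), Amat_mul_succ (n := m+1)]
      have e1 := st_symm (n := m+2) i.castSucc j.castSucc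
      have e2 := st_symm (n := m+2) i.succ j.castSucc
      have e3 := st_symm (n := m+2) i.castSucc j.succ
      have e4 := st_symm (n := m+2) i.succ j.succ
      rw [if_neg (by simp : ¬(((i.succ : Fin (m+2)):ℕ) = 0 ∧ ((j.castSucc : Fin (m+2)):ℕ) = 0))] at e2
      rw [if_neg (by simp : ¬(((i.castSucc : Fin (m+2)):ℕ) = 0 ∧ ((j.succ : Fin (m+2)):ℕ) = 0))] at e3
      rw [if_neg (by simp : ¬(((i.succ : Fin (m+2)):ℕ) = 0 ∧ ((j.succ : Fin (m+2)):ℕ) = 0))] at e4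
      by_cases hij : i = 0 ∧ j = 0
      · obtain ⟨hi, hj⟩ := hij
        subst hi; subst hj
        rw [if_pos ⟨rfl, rfl⟩]
        rw [if_pos (by simp : ((((0:Fin (m+1)).castSucc : Fin (m+2)):ℕ) = 0
            ∧ (((0:Fin (m+1)).castSucc : Fin (m+2)):ℕ) = 0))] at e1
        omega
      · rw [if_neg hij]
        rw [if_neg (by
          intro h
          exact hij ⟨Fin.ext (by simpa using h.1), Fin.ext (by simpa using h.2)⟩)] at e1
        omega
    have hrel0 : ∀ i : Fin (m+1),
        ((Amat (m+2) * st (m+2) * (Amat (m+2))ᵀ).submatrix Fin.succ Fin.succ) i 0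
          = (if i = 0 then 8 else 0)
            - ((Amat (m+2) * st (m+2)).submatrix Fin.succ Fin.succ) i 0 := by
      intro i
      rw [Matrix.submatrix_apply, Matrix.submatrix_apply,
          mul_Amat_succ (n := m+1), Fin.castSucc_zero,
          Amat_mul_succ (n := m+1) (j := (0 : Fin (m+2))),
          st_col0 _ _ rfl, st_col0 _ _ rfl]
      rw [if_neg (by simp : ¬((i.succ : Fin (m+2)):ℕ) = 0)]
      by_cases hi : i = 0
      · subst hi
        rw [if_pos rfl, if_pos (by simp : (((0:Fin (m+1)).castSucc : Fin (m+2)):ℕ) = 0)]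
        norm_num
      · rw [if_neg hi, if_neg (by
          intro h
          exact hi (Fin.ext (by simpa using h)))]
        rw [Fin.coe_castSucc, Fin.val_succ, pow_succ]
        ring
    have hrel : ∀ (i : Fin (m+1)) (j : Fin m),
        ((Amat (m+2) * st (m+2) * (Amat (m+2))ᵀ).submatrix Fin.succ Fin.succ) i j.succ
          = 2 * ((Amat (m+2) * st (m+2)).submatrix Fin.succ Fin.succ) i j.castSucc
            - ((Amat (m+2) * st (m+2)).submatrix Fin.succ Fin.succ) i j.succ := by
      intro i j
      rw [Matrix.submatrix_apply, Matrix.submatrix_apply, Matrix.submatrix_apply,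
          mul_Amat_succ (n := m+1), ← Fin.succ_castSucc]
    have hcore := core _ _ hskew hrel0 hrel
    calc (st (m+2)).det
        = (Amat (m+2) * st (m+2) * (Amat (m+2))ᵀ).det := hdM.symm
      _ = ((Amat (m+2) * st (m+2) * (Amat (m+2))ᵀ).submatrix Fin.succ Fin.succ).det := hPdet
      _ = ((Amat (m+2) * st (m+2)).submatrix Fin.succ Fin.succ).det := hcore
      _ = ((w (m+2)).submatrix Fin.succ Fin.succ).det := by rw [hwZ]
      _ = (w (m+2)).det := hwdet.symm
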